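/- Let D, K be positive integers, let a_1, …, a_K ∈ ℝ^D, let w ∈ ℝ^K be a probability vector (w_k ≥ 0, Σ_k w_k = 1), and let σ > 0. Let H be a random variable on {1,…,K} with P(H = k) = w_k, let Z be a random vector in ℝ^D whose coordinates are independent standard (mean 0, variance 1) Gaussian random variables, with H and Z independent, and set x = a_H + σZ, with mean m = E[x] = Σ_k w_k a_k. Then for all indices i, j, l ∈ {1,…,D}, E[x_i x_j x_l] = Σ_{k=1}^K w_k a_{ik} a_{jk} a_{lk} + σ² (m_i δ_{jl} + m_j δ_{il} + m_l δ_{ij}). Consequently, E[x ⊗ x ⊗ x] − σ² Σ_{i=1}^D (m ⊗ e_i ⊗ e_i + e_i ⊗ m ⊗ e_i + e_i ⊗ e_i ⊗ m) = Σ_{k=1}^K w_k a_k ⊗ a_k ⊗ a_k, where e_i denotes the i-th standard basis vector of ℝ^D. -/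

import Mathlib

open MeasureTheory ProbabilityTheory

section auxsec
open Real Set

lemma aux_integrable_pow_mul_exp (n : ℕ) {b : ℝ} (hb : 0 < b) :
    Integrable fun x : ℝ => x ^ n * Real.exp (-b * x ^ 2) := by
  have h := integrable_rpow_mul_exp_neg_mul_sq hb (s := (n : ℝ))
    (lt_of_lt_of_le (by norm_num) (Nat.cast_nonneg n))
  simpa [Real.rpow_natCast] using h

lemma aux_integral_odd_eq_zero {g : ℝ → ℝ} (hg : ∀ x, g (-x) = -g x) :
    ∫ x : ℝ, g x = 0 := by
  have h1 : ∫ x : ℝ, g (-x) = ∫ x : ℝ, g x := by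
    exact (Measure.measurePreserving_neg (volume : Measure ℝ)).integral_comp
      (Homeomorph.neg ℝ).measurableEmbedding g
  have h2 : ∫ x : ℝ, g (-x) = - ∫ x : ℝ, g x := by
    simp_rw [hg]; exact integral_neg g
  linarith [h1, h2]

lemma aux_integral_sq_exp : ∫ x : ℝ, x ^ 2 * Real.exp (-(1/2 : ℝ) * x ^ 2)
    = Real.sqrt (2 * π) := by
  have habs : ∫ x : ℝ, x ^ 2 * Real.exp (-(1/2 : ℝ) * x ^ 2)
      = 2 * ∫ x in Ioi (0:ℝ), x ^ 2 * Real.exp (-(1/2 : ℝ) * x ^ 2) := by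
    rw [← integral_comp_abs (f := fun x => x ^ 2 * Real.exp (-(1/2 : ℝ) * x ^ 2))]
    congr 1; funext x; rw [sq_abs]
  rw [habs]
  have h := integral_rpow_mul_exp_neg_mul_rpow (p := 2) (q := 2) (b := 1/2)
    (by norm_num) (by norm_num) (by norm_num)
  rw [show ∫ x in Ioi (0:ℝ), x ^ 2 * Real.exp (-(1/2 : ℝ) * x ^ 2)
      = ∫ x in Ioi (0:ℝ), x ^ (2:ℝ) * Real.exp (-(1/2:ℝ) * x ^ (2:ℝ)) by
    refine setIntegral_congr_fun measurableSet_Ioi (fun x hx => ?_)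
    rw [← Real.rpow_natCast x 2]; norm_num, h]
  have hΓ : Real.Gamma ((2 + 1) / 2) = Real.sqrt π / 2 := by
    rw [show ((2:ℝ) + 1)/2 = 1/2 + 1 by norm_num, Real.Gamma_add_one (by norm_num),
      Real.Gamma_one_half_eq]
    ring
  have e1 : ((1:ℝ)/2) ^ (-(2 + 1) / 2 : ℝ) = (2:ℝ) ^ ((3:ℝ)/2) := by
    rw [show (-(2+1)/2 : ℝ) = -(3/2) by norm_num, one_div, Real.inv_rpow (by norm_num),
      Real.rpow_neg (by norm_num), inv_inv]
  have e2 : (2:ℝ) ^ ((3:ℝ)/2) = Real.sqrt 2 * 2 := by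
    rw [show (3:ℝ)/2 = 1/2 + 1 by norm_num, Real.rpow_add (by norm_num), Real.rpow_one,
      ← Real.sqrt_eq_rpow]
  rw [hΓ, e1, e2, Real.sqrt_mul (by norm_num) π]
  ring

lemma aux_pdf_eq (x : ℝ) : gaussianPDFReal 0 1 x
    = (Real.sqrt (2 * π))⁻¹ * Real.exp (-(1/2 : ℝ) * x ^ 2) := by
  unfold gaussianPDFReal
  rw [NNReal.coe_one, mul_one]
  congr 1
  ring

lemma aux_pdf_smul (n : ℕ) : (fun x : ℝ => Real.toNNReal (gaussianPDFReal 0 1 x) • x ^ n)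
    = fun x : ℝ => (Real.sqrt (2 * π))⁻¹ * (x ^ n * Real.exp (-(1/2 : ℝ) * x ^ 2)) := by
  funext y
  rw [NNReal.smul_def, smul_eq_mul, Real.coe_toNNReal _ (gaussianPDFReal_nonneg 0 1 y),
    aux_pdf_eq]
  ring

lemma aux_gauss_integrable (n : ℕ) :
    Integrable (fun x : ℝ => x ^ n) (gaussianReal 0 1) := by
  rw [gaussianReal_of_var_ne_zero 0 one_ne_zero,
    show gaussianPDF 0 1 = fun x => ((Real.toNNReal (gaussianPDFReal 0 1 x) : NNReal) : ENNReal)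
      from rfl,
    integrable_withDensity_iff_integrable_smul (measurable_gaussianPDFReal 0 1).real_toNNReal,
    aux_pdf_smul n]
  exact (aux_integrable_pow_mul_exp n (by norm_num)).const_mul _

lemma aux_gauss_moment (n : ℕ) : ∫ x, x ^ n ∂(gaussianReal 0 1)
    = (Real.sqrt (2 * π))⁻¹ * ∫ x : ℝ, x ^ n * Real.exp (-(1/2 : ℝ) * x ^ 2) := by
  rw [gaussianReal_of_var_ne_zero 0 one_ne_zero,
    show gaussianPDF 0 1 = fun x => ((Real.toNNReal (gaussianPDFReal 0 1 x) : NNReal) : ENNReal)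
      from rfl,
    integral_withDensity_eq_integral_smul (measurable_gaussianPDFReal 0 1).real_toNNReal,
    aux_pdf_smul n, integral_const_mul]

lemma aux_gauss_moment_one : ∫ x, x ∂(gaussianReal 0 1) = 0 := by
  have h := aux_gauss_moment 1
  simp only [pow_one] at h
  rw [h, aux_integral_odd_eq_zero (fun x => by simp only [neg_sq]; ring), mul_zero]

lemma aux_gauss_moment_two : ∫ x, x ^ 2 ∂(gaussianReal 0 1) = 1 := by
  rw [aux_gauss_moment 2, aux_integral_sq_exp, inv_mul_cancel₀]
  positivity

lemma aux_gauss_moment_three : ∫ x, x ^ 3 ∂(gaussianReal 0 1) = 0 := by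
  rw [aux_gauss_moment 3, aux_integral_odd_eq_zero (fun x => by simp only [neg_sq]; ring), mul_zero]
end auxsec

/-- Spherical Gaussian mixture third moment: with `m = E[x] = ∑ k, w k • a k`,
`E[x_i x_j x_l] = ∑ k, w k a_{ik} a_{jk} a_{lk} + σ² (m_i δ_{jl} + m_j δ_{il} + m_l δ_{ij})`;
consequently
`E[x⊗x⊗x] − σ² ∑ i (m⊗e_i⊗e_i + e_i⊗m⊗e_i + e_i⊗e_i⊗m) = ∑ k, w k • a_k⊗a_k⊗a_k`. -/
theorem gaussian_mixture_third_moment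
    {Ω : Type*} [MeasureSpace Ω] [IsProbabilityMeasure (ℙ : Measure Ω)]
    (D K : ℕ) (hD : 0 < D) (hK : 0 < K)
    (a : Fin K → Fin D → ℝ) (w : Fin K → ℝ)
    (hw0 : ∀ k, 0 ≤ w k) (hw1 : ∑ k, w k = 1)
    (σ : ℝ) (hσ : 0 < σ)
    (H : Ω → Fin K) (Z : Ω → Fin D → ℝ)
    (hH : Measurable H) (hZ : Measurable Z)
    (hHk : ∀ k, (ℙ : Measure Ω) (H ⁻¹' {k}) = ENNReal.ofReal (w k))
    (hZgauss : ∀ i, Measure.map (fun ω => Z ω i) (ℙ : Measure Ω) = gaussianReal 0 1)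
    (hZindep : iIndepFun (fun i ω => Z ω i) (ℙ : Measure Ω))
    (hHZ : IndepFun H Z (ℙ : Measure Ω))
    (x : Ω → Fin D → ℝ) (hx : ∀ ω, x ω = a (H ω) + σ • Z ω)
    (m : Fin D → ℝ) (hm : m = ∑ k, w k • a k)
    (e : Fin D → Fin D → ℝ) (he : ∀ i, e i = Pi.single i 1) :
    (∀ i j l, (∫ ω, x ω i * x ω j * x ω l ∂(ℙ : Measure Ω)) =
        (∑ k, w k * (a k i * a k j * a k l)) +
          σ ^ 2 * (m i * (if j = l then 1 else 0) + m j * (if i = l then 1 else 0) +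
            m l * (if i = j then 1 else 0))) ∧
      (fun p q r => (∫ ω, x ω p * x ω q * x ω r ∂(ℙ : Measure Ω)) -
          σ ^ 2 * ∑ i, (m p * e i q * e i r + e i p * m q * e i r + e i p * e i q * m r)) =
        (fun p q r => ∑ k, w k * (a k p * a k q * a k r)) := by
  have hW : ∀ i, Measurable fun ω => Z ω i := fun i => (measurable_pi_apply i).comp hZ
  have intmul : ∀ (f g : Ω → ℝ), IndepFun f g ℙ → AEStronglyMeasurable f ℙ →
      AEStronglyMeasurable g ℙ →
      (∫ ω, f ω * g ω ∂(ℙ : Measure Ω)) =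
        (∫ ω, f ω ∂(ℙ : Measure Ω)) * ∫ ω, g ω ∂(ℙ : Measure Ω) :=
    fun f g h hf hg => h.integral_fun_mul_eq_mul_integral hf hg
  -- integrability and moments of powers of coordinates of Z
  have hZint : ∀ (n : ℕ) (i : Fin D), Integrable (fun ω => Z ω i ^ n) ℙ := by
    intro n i
    have h := (integrable_map_measure (measurable_id.pow_const n).aestronglyMeasurable
      (hW i).aemeasurable).mp (by rw [hZgauss i]; exact aux_gauss_integrable n)
    simpa [Function.comp_def] using h
  have hZmom : ∀ (n : ℕ) (i : Fin D),
      (∫ ω, Z ω i ^ n ∂(ℙ : Measure Ω)) = ∫ y, y ^ n ∂(gaussianReal 0 1) := by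
    intro n i
    rw [← hZgauss i]
    exact (integral_map (hW i).aemeasurable
      (Measurable.aestronglyMeasurable (by measurability : Measurable fun y : ℝ => y ^ n))).symm
  have hZ1 : ∀ i : Fin D, (∫ ω, Z ω i ∂(ℙ : Measure Ω)) = 0 := by
    intro i
    have h := (hZmom 1 i).trans (by simp only [pow_one]; exact aux_gauss_moment_one)
    simpa using h
  have hZint1 : ∀ i : Fin D, Integrable (fun ω => Z ω i) ℙ := by
    intro i; simpa using hZint 1 i
  -- H side
  have hHint : ∀ g : Fin K → ℝ, Integrable (fun ω => g (H ω)) ℙ := by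
    intro g
    have : IsProbabilityMeasure (Measure.map H ℙ) := Measure.isProbabilityMeasure_map hH.aemeasurable
    have h := (integrable_map_measure (measurable_of_countable g).aestronglyMeasurable
      hH.aemeasurable).mp
      (Integrable.of_finite : Integrable g (Measure.map H (ℙ : Measure Ω)))
    simpa [Function.comp_def] using h
  have hHsum : ∀ g : Fin K → ℝ, (∫ ω, g (H ω) ∂(ℙ : Measure Ω)) = ∑ k, w k * g k := by
    intro g
    have : IsProbabilityMeasure (Measure.map H ℙ) := Measure.isProbabilityMeasure_map hH.aemeasurable
    rw [← integral_map hH.aemeasurable (measurable_of_countable g).aestronglyMeasurable,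
      integral_fintype
        (Integrable.of_finite : Integrable g (Measure.map H (ℙ : Measure Ω)))]
    refine Finset.sum_congr rfl fun k _ => ?_
    rw [measureReal_def, Measure.map_apply hH (measurableSet_singleton k), hHk k,
      ENNReal.toReal_ofReal (hw0 k), smul_eq_mul]
  -- mixed H/Z integrals
  have hMix : ∀ (g : Fin K → ℝ) (φ : (Fin D → ℝ) → ℝ), Measurable φ →
      Integrable (fun ω => φ (Z ω)) ℙ →
      Integrable (fun ω => g (H ω) * φ (Z ω)) ℙ ∧
      (∫ ω, g (H ω) * φ (Z ω) ∂(ℙ : Measure Ω)) =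
        (∑ k, w k * g k) * ∫ ω, φ (Z ω) ∂(ℙ : Measure Ω) := by
    intro g φ hφ hφint
    have hind : IndepFun (fun ω => g (H ω)) (fun ω => φ (Z ω)) ℙ :=
      hHZ.comp (measurable_of_countable g) hφ
    refine ⟨hind.integrable_mul (hHint g) hφint, ?_⟩
    rw [← hHsum g]
    exact intmul _ _ hind ((measurable_of_countable g).comp hH).aestronglyMeasurable
      (hφ.comp hZ).aestronglyMeasurable
  -- second moments of Z
  have hZ2 : ∀ p q : Fin D, Integrable (fun ω => Z ω p * Z ω q) ℙ ∧
      (∫ ω, Z ω p * Z ω q ∂(ℙ : Measure Ω)) = (if p = q then 1 else 0) := by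
    intro p q
    by_cases h : p = q
    · subst h
      have hsq : (fun ω => Z ω p * Z ω p) = fun ω => Z ω p ^ 2 := by funext ω; ring
      refine ⟨by rw [hsq]; exact hZint 2 p, ?_⟩
      rw [if_pos rfl, hsq, hZmom 2 p, aux_gauss_moment_two]
    · have hind : IndepFun (fun ω => Z ω p) (fun ω => Z ω q) ℙ := hZindep.indepFun h
      refine ⟨hind.integrable_mul (hZint1 p) (hZint1 q), ?_⟩
      rw [if_neg h]
      rw [intmul _ _ hind (hW p).aestronglyMeasurable (hW q).aestronglyMeasurable,
        hZ1 p, zero_mul]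
  -- third moments of Z vanish
  have hZ3 : ∀ p q r : Fin D, Integrable (fun ω => Z ω p * Z ω q * Z ω r) ℙ ∧
      (∫ ω, Z ω p * Z ω q * Z ω r ∂(ℙ : Measure Ω)) = 0 := by
    intro p q r
    by_cases hpq : p = q
    · subst hpq
      by_cases hpr : p = r
      · subst hpr
        have hc : (fun ω => Z ω p * Z ω p * Z ω p) = fun ω => Z ω p ^ 3 := by funext ω; ring
        refine ⟨by rw [hc]; exact hZint 3 p, ?_⟩
        rw [hc, hZmom 3 p, aux_gauss_moment_three]
      · have hc : (fun ω => Z ω p * Z ω p * Z ω r) = fun ω => Z ω p ^ 2 * Z ω r := by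
          funext ω; ring
        have hind : IndepFun (fun ω => Z ω p ^ 2) (fun ω => Z ω r) ℙ :=
          (hZindep.indepFun hpr).comp (measurable_id.pow_const 2) measurable_id
        refine ⟨by rw [hc]; exact hind.integrable_mul (hZint 2 p) (hZint1 r), ?_⟩
        rw [hc, intmul _ _ hind ((hW p).pow_const 2).aestronglyMeasurable
          (hW r).aestronglyMeasurable, hZ1 r, mul_zero]
    · by_cases hqr : q = r
      · subst hqr
        have hc : (fun ω => Z ω p * Z ω q * Z ω q) = fun ω => Z ω p * Z ω q ^ 2 := by
          funext ω; ring
        have hind : IndepFun (fun ω => Z ω p) (fun ω => Z ω q ^ 2) ℙ :=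
          (hZindep.indepFun hpq).comp measurable_id (measurable_id.pow_const 2)
        refine ⟨by rw [hc]; exact hind.integrable_mul (hZint1 p) (hZint 2 q), ?_⟩
        rw [hc, intmul _ _ hind (hW p).aestronglyMeasurable
          ((hW q).pow_const 2).aestronglyMeasurable, hZ1 p, zero_mul]
      · by_cases hpr : p = r
        · subst hpr
          have hc : (fun ω => Z ω p * Z ω q * Z ω p) = fun ω => Z ω p ^ 2 * Z ω q := by
            funext ω; ring
          have hind : IndepFun (fun ω => Z ω p ^ 2) (fun ω => Z ω q) ℙ :=
            (hZindep.indepFun hpq).comp (measurable_id.pow_const 2) measurable_id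
          refine ⟨by rw [hc]; exact hind.integrable_mul (hZint 2 p) (hZint1 q), ?_⟩
          rw [hc, intmul _ _ hind ((hW p).pow_const 2).aestronglyMeasurable
            (hW q).aestronglyMeasurable, hZ1 q, mul_zero]
        · have hind : IndepFun (fun ω => Z ω p)
              ((fun ω => Z ω q) * fun ω => Z ω r) ℙ :=
            hZindep.indepFun_mul_right hW p q r hpq hpr
          have hmul : Integrable ((fun ω => Z ω q) * fun ω => Z ω r) ℙ := (hZ2 q r).1
          have hint : Integrable (fun ω => Z ω p * Z ω q * Z ω r) ℙ := by
            have := hind.integrable_mul (hZint1 p) hmul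
            simpa [Pi.mul_def, mul_assoc] using this
          refine ⟨hint, ?_⟩
          have hc : (fun ω => Z ω p * Z ω q * Z ω r)
              = fun ω => Z ω p * (Z ω q * Z ω r) := by funext ω; ring
          have hind' : IndepFun (fun ω => Z ω p) (fun ω => Z ω q * Z ω r) ℙ := hind
          rw [hc, intmul _ _ hind' (hW p).aestronglyMeasurable
            ((hW q).mul (hW r)).aestronglyMeasurable, hZ1 p, zero_mul]
  have hmi : ∀ t : Fin D, m t = ∑ k, w k * a k t := by
    intro t; rw [hm]; simp [Finset.sum_apply]
  -- first part
  have main : ∀ i j l, (∫ ω, x ω i * x ω j * x ω l ∂(ℙ : Measure Ω)) =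
      (∑ k, w k * (a k i * a k j * a k l)) +
        σ ^ 2 * (m i * (if j = l then 1 else 0) + m j * (if i = l then 1 else 0) +
          m l * (if i = j then 1 else 0)) := by
    intro i j l
    have hxexp : (fun ω => x ω i * x ω j * x ω l) = fun ω =>
        a (H ω) i * a (H ω) j * a (H ω) l
        + (a (H ω) i * a (H ω) j * (σ * Z ω l)
        + (a (H ω) i * a (H ω) l * (σ * Z ω j)
        + (a (H ω) j * a (H ω) l * (σ * Z ω i)
        + (a (H ω) i * (σ ^ 2 * (Z ω j * Z ω l))
        + (a (H ω) j * (σ ^ 2 * (Z ω i * Z ω l))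
        + (a (H ω) l * (σ ^ 2 * (Z ω i * Z ω j))
        + σ ^ 3 * (Z ω i * Z ω j * Z ω l))))))) := by
      funext ω
      rw [hx ω]
      simp only [Pi.add_apply, Pi.smul_apply, smul_eq_mul]
      ring
    have M2 := hMix (fun k => a k i * a k j) (fun z => σ * z l)
      (by fun_prop) ((hZint1 l).const_mul σ)
    have M3 := hMix (fun k => a k i * a k l) (fun z => σ * z j)
      (by fun_prop) ((hZint1 j).const_mul σ)
    have M4 := hMix (fun k => a k j * a k l) (fun z => σ * z i)
      (by fun_prop) ((hZint1 i).const_mul σ)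
    have M5 := hMix (fun k => a k i) (fun z => σ ^ 2 * (z j * z l))
      (by fun_prop)
      (((hZ2 j l).1).const_mul (σ ^ 2))
    have M6 := hMix (fun k => a k j) (fun z => σ ^ 2 * (z i * z l))
      (by fun_prop)
      (((hZ2 i l).1).const_mul (σ ^ 2))
    have M7 := hMix (fun k => a k l) (fun z => σ ^ 2 * (z i * z j))
      (by fun_prop)
      (((hZ2 i j).1).const_mul (σ ^ 2))
    have J1 : Integrable (fun ω => a (H ω) i * a (H ω) j * a (H ω) l) ℙ :=
      hHint (fun k => a k i * a k j * a k l)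
    have J2 : Integrable (fun ω => a (H ω) i * a (H ω) j * (σ * Z ω l)) ℙ := M2.1
    have J3 : Integrable (fun ω => a (H ω) i * a (H ω) l * (σ * Z ω j)) ℙ := M3.1
    have J4 : Integrable (fun ω => a (H ω) j * a (H ω) l * (σ * Z ω i)) ℙ := M4.1
    have J5 : Integrable (fun ω => a (H ω) i * (σ ^ 2 * (Z ω j * Z ω l))) ℙ := M5.1
    have J6 : Integrable (fun ω => a (H ω) j * (σ ^ 2 * (Z ω i * Z ω l))) ℙ := M6.1
    have J7 : Integrable (fun ω => a (H ω) l * (σ ^ 2 * (Z ω i * Z ω j))) ℙ := M7.1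
    have J8 : Integrable (fun ω => σ ^ 3 * (Z ω i * Z ω j * Z ω l)) ℙ :=
      ((hZ3 i j l).1).const_mul (σ ^ 3)
    have s7 : Integrable (fun ω => a (H ω) l * (σ ^ 2 * (Z ω i * Z ω j))
        + σ ^ 3 * (Z ω i * Z ω j * Z ω l)) ℙ := J7.add J8
    have s6 : Integrable (fun ω => a (H ω) j * (σ ^ 2 * (Z ω i * Z ω l))
        + (a (H ω) l * (σ ^ 2 * (Z ω i * Z ω j))
        + σ ^ 3 * (Z ω i * Z ω j * Z ω l))) ℙ := J6.add s7
    have s5 : Integrable (fun ω => a (H ω) i * (σ ^ 2 * (Z ω j * Z ω l))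
        + (a (H ω) j * (σ ^ 2 * (Z ω i * Z ω l))
        + (a (H ω) l * (σ ^ 2 * (Z ω i * Z ω j))
        + σ ^ 3 * (Z ω i * Z ω j * Z ω l)))) ℙ := J5.add s6
    have s4 : Integrable (fun ω => a (H ω) j * a (H ω) l * (σ * Z ω i)
        + (a (H ω) i * (σ ^ 2 * (Z ω j * Z ω l))
        + (a (H ω) j * (σ ^ 2 * (Z ω i * Z ω l))
        + (a (H ω) l * (σ ^ 2 * (Z ω i * Z ω j))
        + σ ^ 3 * (Z ω i * Z ω j * Z ω l))))) ℙ := J4.add s5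
    have s3 : Integrable (fun ω => a (H ω) i * a (H ω) l * (σ * Z ω j)
        + (a (H ω) j * a (H ω) l * (σ * Z ω i)
        + (a (H ω) i * (σ ^ 2 * (Z ω j * Z ω l))
        + (a (H ω) j * (σ ^ 2 * (Z ω i * Z ω l))
        + (a (H ω) l * (σ ^ 2 * (Z ω i * Z ω j))
        + σ ^ 3 * (Z ω i * Z ω j * Z ω l)))))) ℙ := J3.add s4
    have s2 : Integrable (fun ω => a (H ω) i * a (H ω) j * (σ * Z ω l)
        + (a (H ω) i * a (H ω) l * (σ * Z ω j)
        + (a (H ω) j * a (H ω) l * (σ * Z ω i)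
        + (a (H ω) i * (σ ^ 2 * (Z ω j * Z ω l))
        + (a (H ω) j * (σ ^ 2 * (Z ω i * Z ω l))
        + (a (H ω) l * (σ ^ 2 * (Z ω i * Z ω j))
        + σ ^ 3 * (Z ω i * Z ω j * Z ω l))))))) ℙ := J2.add s3
    rw [hxexp, integral_add J1 s2, integral_add J2 s3, integral_add J3 s4,
      integral_add J4 s5, integral_add J5 s6, integral_add J6 s7, integral_add J7 J8]
    have V1 : (∫ ω, a (H ω) i * a (H ω) j * a (H ω) l ∂(ℙ : Measure Ω))
        = ∑ k, w k * (a k i * a k j * a k l) := hHsum (fun k => a k i * a k j * a k l)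
    have V2 : (∫ ω, a (H ω) i * a (H ω) j * (σ * Z ω l) ∂(ℙ : Measure Ω))
        = (∑ k, w k * (a k i * a k j)) * ∫ ω, σ * Z ω l ∂(ℙ : Measure Ω) := M2.2
    have V3 : (∫ ω, a (H ω) i * a (H ω) l * (σ * Z ω j) ∂(ℙ : Measure Ω))
        = (∑ k, w k * (a k i * a k l)) * ∫ ω, σ * Z ω j ∂(ℙ : Measure Ω) := M3.2
    have V4 : (∫ ω, a (H ω) j * a (H ω) l * (σ * Z ω i) ∂(ℙ : Measure Ω))
        = (∑ k, w k * (a k j * a k l)) * ∫ ω, σ * Z ω i ∂(ℙ : Measure Ω) := M4.2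
    have V5 : (∫ ω, a (H ω) i * (σ ^ 2 * (Z ω j * Z ω l)) ∂(ℙ : Measure Ω))
        = (∑ k, w k * a k i) * ∫ ω, σ ^ 2 * (Z ω j * Z ω l) ∂(ℙ : Measure Ω) := M5.2
    have V6 : (∫ ω, a (H ω) j * (σ ^ 2 * (Z ω i * Z ω l)) ∂(ℙ : Measure Ω))
        = (∑ k, w k * a k j) * ∫ ω, σ ^ 2 * (Z ω i * Z ω l) ∂(ℙ : Measure Ω) := M6.2
    have V7 : (∫ ω, a (H ω) l * (σ ^ 2 * (Z ω i * Z ω j)) ∂(ℙ : Measure Ω))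
        = (∑ k, w k * a k l) * ∫ ω, σ ^ 2 * (Z ω i * Z ω j) ∂(ℙ : Measure Ω) := M7.2
    rw [V1, V2, V3, V4, V5, V6, V7,
      integral_const_mul σ, integral_const_mul σ, integral_const_mul σ,
      integral_const_mul (σ ^ 2), integral_const_mul (σ ^ 2), integral_const_mul (σ ^ 2),
      integral_const_mul (σ ^ 3), hZ1 i, hZ1 j, hZ1 l, (hZ2 j l).2, (hZ2 i l).2, (hZ2 i j).2,
      (hZ3 i j l).2, hmi i, hmi j, hmi l]
    ring
  refine ⟨main, ?_⟩
  funext p q r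
  rw [main p q r]
  have hsum : (∑ i, (m p * e i q * e i r + e i p * m q * e i r + e i p * e i q * m r))
      = m p * (if q = r then 1 else 0) + m q * (if p = r then 1 else 0)
        + m r * (if p = q then 1 else 0) := by
    simp only [he, Pi.single_apply, Finset.sum_add_distrib, mul_ite, ite_mul, mul_one, one_mul,
      mul_zero, zero_mul, Finset.sum_ite_eq, Finset.mem_univ, if_true]
  rw [hsum]
  ring
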